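/- Let X be a Banach space, S a closed subset of X, and x₀ ∈ S. The following three conditions on a bounded set D ⊆ X are equivalent: (i) for each ε > 0 there exists δ > 0 such that for each v ∈ D and each x ∈ S ∩ (x₀ + δ·closedBall) there exists λ > 0 (possibly depending on v and x) with S ∩ (x + t(v + ε·closedBall)) nonempty for all t ∈ [0, λ]; (ii) for each ε > 0 there exists δ > 0 such that for each v ∈ D and each x ∈ S ∩ (x₀ + δ·closedBall) there exists a sequence of positive reals tₘ → 0 with S ∩ (x + tₘ(v + ε·closedBall)) nonempty for all m; (iii) for each ε > 0 there exist δ > 0 and λ > 0 such that for all v ∈ D, all x ∈ S ∩ (x₀ + δ·closedBall), and all t ∈ [0, λ], the set S ∩ (x + t(v + ε·closedBall)) is nonempty. -/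

import Mathlib

open Metric Filter

section Aux

variable {X : Type*} [NormedAddCommGroup X] [NormedSpace ℝ X] [CompleteSpace X]

/-- Goodness predicate: `p.1` is a point of `S` lying within `ε * p.2` of `x + p.2 • v`. -/
def uts_IsGood (S : Set X) (x v : X) (ε t : ℝ) (p : X × ℝ) : Prop :=
  p.1 ∈ S ∧ 0 ≤ p.2 ∧ p.2 ≤ t ∧ ‖p.1 - (x + p.2 • v)‖ ≤ ε * p.2

/-- Admissible step sizes from a good point. -/
def uts_stepSet (S : Set X) (v : X) (ε t : ℝ) (y : X) (τ : ℝ) : Set ℝ :=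
  {s | 0 < s ∧ s ≤ t - τ ∧ ∃ b : X, ‖b‖ ≤ 1 ∧ y + s • (v + ε • b) ∈ S}

theorem uts_key (S : Set X) (hS : IsClosed S) (x₀ v : X) (ε δ t : ℝ) (hε : 0 < ε)
    (hii : ∀ y ∈ S, ‖y - x₀‖ ≤ δ → ∃ tm : ℕ → ℝ, (∀ m, 0 < tm m) ∧
      Tendsto tm atTop (nhds 0) ∧ ∀ m, ∃ b : X, ‖b‖ ≤ 1 ∧ y + tm m • (v + (ε/2) • b) ∈ S)
    (x : X) (hx : x ∈ S) (ht : 0 < t)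
    (hball : ∀ (τ : ℝ) (y : X), 0 ≤ τ → τ ≤ t → y ∈ S → ‖y - (x + τ • v)‖ ≤ ε * τ →
      ‖y - x₀‖ ≤ δ) :
    ∃ b : X, ‖b‖ ≤ 1 ∧ x + t • (v + ε • b) ∈ S := by
  by_contra H
  -- From the contradiction hypothesis: no point of S is within ε*t of x + t•v.
  have Hy : ∀ y ∈ S, ¬ (‖y - (x + t • v)‖ ≤ ε * t) := by
    intro y hyS hle
    refine H ⟨(ε * t)⁻¹ • (y - (x + t • v)), ?_, ?_⟩
    · rw [norm_smul, Real.norm_eq_abs, abs_inv, abs_of_pos (by positivity)]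
      rw [inv_mul_le_iff₀ (by positivity)]
      simpa using hle
    · have hne : (ε * t) ≠ 0 := by positivity
      have : x + t • (v + ε • ((ε * t)⁻¹ • (y - (x + t • v)))) = y := by
        rw [smul_add, smul_smul, smul_smul, mul_comm t ε,
          mul_inv_cancel₀ hne, one_smul]
        abel
      rw [this]; exact hyS
  set C : ℝ := ‖v‖ + ε with hCdef
  have hC0 : 0 < C := by positivity
  have hglt : ∀ p : X × ℝ, uts_IsGood S x v ε t p → p.2 < t := by
    intro p hp
    by_contra hlt
    have heq : p.2 = t := le_antisymm hp.2.2.1 (not_lt.1 hlt)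
    exact Hy p.1 hp.1 (by rw [← heq]; exact hp.2.2.2)
  have hbdd : ∀ (y : X) (τ : ℝ), BddAbove (uts_stepSet S v ε t y τ) :=
    fun y τ => ⟨t - τ, fun s hs => hs.2.1⟩
  have hmemhalf : ∀ (y : X) (s : ℝ) (b : X), ‖b‖ ≤ 1 → y + s • (v + (ε/2) • b) ∈ S →
      ∃ b' : X, ‖b'‖ ≤ 1 ∧ y + s • (v + ε • b') ∈ S := by
    intro y s b hb hmem
    refine ⟨(2:ℝ)⁻¹ • b, ?_, ?_⟩
    · calc ‖(2:ℝ)⁻¹ • b‖ = 2⁻¹ * ‖b‖ := by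
            rw [norm_smul, Real.norm_eq_abs, abs_of_pos (by norm_num : (0:ℝ) < 2⁻¹)]
        _ ≤ 2⁻¹ * 1 := by gcongr
        _ ≤ 1 := by norm_num
    · have h2 : ε • ((2:ℝ)⁻¹ • b) = (ε/2) • b := by
        rw [smul_smul, ← div_eq_mul_inv]
      rw [h2]; exact hmem
  have hne : ∀ p : X × ℝ, uts_IsGood S x v ε t p →
      (uts_stepSet S v ε t p.1 p.2).Nonempty := by
    intro p hp
    obtain ⟨tm, htmpos, htm0, htmS⟩ := hii p.1 hp.1 (hball p.2 p.1 hp.2.1 hp.2.2.1 hp.1 hp.2.2.2)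
    have hlt := hglt p hp
    obtain ⟨m, hm⟩ := (htm0.eventually
      (gt_mem_nhds (show (0:ℝ) < t - p.2 by linarith))).exists
    obtain ⟨b, hb, hmem⟩ := htmS m
    obtain ⟨b', hb', hmem'⟩ := hmemhalf p.1 (tm m) b hb hmem
    exact ⟨tm m, htmpos m, hm.le, b', hb', hmem'⟩
  have hstep : ∀ p : X × ℝ, uts_IsGood S x v ε t p → ∃ q : X × ℝ,
      uts_IsGood S x v ε t q ∧ p.2 < q.2 ∧
      sSup (uts_stepSet S v ε t p.1 p.2) ≤ 2 * (q.2 - p.2) ∧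
      ‖q.1 - p.1‖ ≤ C * (q.2 - p.2) := by
    intro p hp
    obtain ⟨s₀, hs₀⟩ := hne p hp
    have hσpos : 0 < sSup (uts_stepSet S v ε t p.1 p.2) :=
      lt_of_lt_of_le hs₀.1 (le_csSup (hbdd _ _) hs₀)
    obtain ⟨s, hsmem, hs2⟩ := exists_lt_of_lt_csSup ⟨s₀, hs₀⟩
      (by linarith : sSup (uts_stepSet S v ε t p.1 p.2) / 2
        < sSup (uts_stepSet S v ε t p.1 p.2))
    obtain ⟨hspos, hsle, b, hb, hmem⟩ := hsmem
    refine ⟨(p.1 + s • (v + ε • b), p.2 + s), ⟨hmem, ?_, ?_, ?_⟩, ?_, ?_, ?_⟩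
    · show (0:ℝ) ≤ p.2 + s
      linarith [hp.2.1]
    · show p.2 + s ≤ t
      linarith
    · show ‖p.1 + s • (v + ε • b) - (x + (p.2 + s) • v)‖ ≤ ε * (p.2 + s)
      have hrw : p.1 + s • (v + ε • b) - (x + (p.2 + s) • v)
          = (p.1 - (x + p.2 • v)) + (s * ε) • b := by
        rw [smul_add, add_smul, smul_smul]; abel
      rw [hrw]
      calc ‖(p.1 - (x + p.2 • v)) + (s * ε) • b‖
          ≤ ‖p.1 - (x + p.2 • v)‖ + ‖(s*ε) • b‖ := norm_add_le _ _
        _ ≤ ε * p.2 + s * ε := by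
            gcongr
            · exact hp.2.2.2
            · calc ‖(s*ε) • b‖ = s * ε * ‖b‖ := by
                    rw [norm_smul, Real.norm_eq_abs, abs_of_pos (by positivity)]
                _ ≤ s * ε * 1 := by gcongr
                _ = s * ε := mul_one _
        _ = ε * (p.2 + s) := by ring
    · show p.2 < p.2 + s
      linarith
    · show sSup (uts_stepSet S v ε t p.1 p.2) ≤ 2 * ((p.2 + s) - p.2)
      have h2 : p.2 + s - p.2 = s := by ring
      rw [h2]; linarith
    · show ‖p.1 + s • (v + ε • b) - p.1‖ ≤ C * ((p.2 + s) - p.2)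
      have h1 : p.1 + s • (v + ε • b) - p.1 = s • (v + ε • b) := by abel
      have h2 : p.2 + s - p.2 = s := by ring
      rw [h1, h2, norm_smul, Real.norm_eq_abs, abs_of_pos hspos]
      calc s * ‖v + ε • b‖ ≤ s * (‖v‖ + ε) := by
            gcongr
            calc ‖v + ε • b‖ ≤ ‖v‖ + ‖ε • b‖ := norm_add_le _ _
              _ ≤ ‖v‖ + ε * 1 := by
                  have hn : ‖ε • b‖ = ε * ‖b‖ := by
                    rw [norm_smul, Real.norm_eq_abs, abs_of_pos hε]
                  rw [hn]
                  gcongr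
              _ = ‖v‖ + ε := by ring
        _ = C * s := by rw [hCdef]; ring
  choose! Q hQgood hQlt hQσ hQdist using hstep
  set f : ℕ → X × ℝ := fun n => Q^[n] (x, 0) with hfdef
  have hfs : ∀ n, f (n+1) = Q (f n) := fun n => Function.iterate_succ_apply' Q n _
  have hgood : ∀ n, uts_IsGood S x v ε t (f n) := by
    intro n; induction n with
    | zero =>
        refine ⟨hx, le_refl 0, ht.le, ?_⟩
        show ‖x - (x + (0:ℝ) • v)‖ ≤ ε * 0
        simp
    | succ n ih => rw [hfs]; exact hQgood _ ih
  set τ : ℕ → ℝ := fun n => (f n).2 with hτdef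
  set y : ℕ → X := fun n => (f n).1 with hydef
  have hτlt : ∀ n, τ n < τ (n+1) := by
    intro n
    show (f n).2 < (f (n+1)).2
    rw [hfs]; exact hQlt _ (hgood n)
  have hτmono : Monotone τ := monotone_nat_of_le_succ fun n => (hτlt n).le
  have hτle : ∀ n, τ n ≤ t := fun n => (hgood n).2.2.1
  have hτ0 : ∀ n, 0 ≤ τ n := fun n => (hgood n).2.1
  have hbddτ : BddAbove (Set.range τ) := ⟨t, by rintro _ ⟨n, rfl⟩; exact hτle n⟩
  have hτtend : Tendsto τ atTop (nhds (⨆ n, τ n)) := tendsto_atTop_ciSup hτmono hbddτ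
  set τinf : ℝ := ⨆ n, τ n with hτinfdef
  have hyd : ∀ m n, m ≤ n → ‖y n - y m‖ ≤ C * (τ n - τ m) := by
    intro m n hmn
    induction n, hmn using Nat.le_induction with
    | base => simp
    | succ n hmn ih =>
      have h1 : ‖y (n+1) - y n‖ ≤ C * (τ (n+1) - τ n) := by
        show ‖(f (n+1)).1 - (f n).1‖ ≤ C * ((f (n+1)).2 - (f n).2)
        rw [hfs]; exact hQdist _ (hgood n)
      calc ‖y (n+1) - y m‖ ≤ ‖y (n+1) - y n‖ + ‖y n - y m‖ :=
            norm_sub_le_norm_sub_add_norm_sub _ _ _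
        _ ≤ C * (τ (n+1) - τ n) + C * (τ n - τ m) := add_le_add h1 ih
        _ = C * (τ (n+1) - τ m) := by ring
  have hycau : CauchySeq y := by
    rw [Metric.cauchySeq_iff]
    intro η hη
    obtain ⟨N, hN⟩ := Metric.cauchySeq_iff.1 hτtend.cauchySeq (η / (C+1)) (by positivity)
    refine ⟨N, fun n hn m hm => ?_⟩
    have key : ∀ a b, N ≤ a → N ≤ b → b ≤ a → dist (y a) (y b) < η := by
      intro a c ha hc hac
      have h1 := hyd c a hac
      have hd := hN a ha c hc
      rw [Real.dist_eq] at hd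
      rw [dist_eq_norm]
      calc ‖y a - y c‖ ≤ C * (τ a - τ c) := h1
        _ ≤ (C+1) * |τ a - τ c| := by nlinarith [abs_nonneg (τ a - τ c), le_abs_self (τ a - τ c)]
        _ < (C+1) * (η / (C+1)) := by
            rw [mul_lt_mul_iff_right₀ (by positivity)]
            exact hd
        _ = η := by field_simp
    rcases le_total m n with h | h
    · exact key n m hn hm h
    · rw [dist_comm]; exact key m n hm hn h
  obtain ⟨yl, hyl⟩ := cauchySeq_tendsto_of_complete hycau
  have hylS : yl ∈ S := hS.mem_of_tendsto hyl (Eventually.of_forall fun n => (hgood n).1)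
  have hτinfle : τinf ≤ t := ciSup_le hτle
  have hτinf0 : (0:ℝ) ≤ τinf := le_trans (hτ0 0) (le_ciSup hbddτ 0)
  have haccI : ‖yl - (x + τinf • v)‖ ≤ ε * τinf := by
    have h1 : Tendsto (fun n => ‖y n - (x + τ n • v)‖) atTop (nhds ‖yl - (x + τinf • v)‖) :=
      (hyl.sub ((hτtend.smul_const v).const_add x)).norm
    have h2 : Tendsto (fun n => ε * τ n) atTop (nhds (ε * τinf)) := hτtend.const_mul ε
    exact le_of_tendsto_of_tendsto' h1 h2 (fun n => (hgood n).2.2.2)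
  have hτinflt : τinf < t := hglt (yl, τinf) ⟨hylS, hτinf0, hτinfle, haccI⟩
  obtain ⟨tm, htmpos, htm0, htmS⟩ := hii yl hylS (hball τinf yl hτinf0 hτinfle hylS haccI)
  obtain ⟨m, hm⟩ := (htm0.eventually
    (gt_mem_nhds (show (0:ℝ) < t - τinf by linarith))).exists
  set s : ℝ := tm m with hsdef
  have hspos : 0 < s := htmpos m
  obtain ⟨b, hb, hmem⟩ := htmS m
  have hev1 : ∀ᶠ n in atTop, y n ∈ Metric.ball yl (ε * s / 2) :=
    hyl (Metric.ball_mem_nhds _ (by positivity))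
  have hdiff : Tendsto (fun n => τ (n+1) - τ n) atTop (nhds 0) := by
    have h1 : Tendsto (fun n => τ (n+1)) atTop (nhds τinf) :=
      hτtend.comp (tendsto_add_atTop_nat 1)
    simpa using h1.sub hτtend
  have hev2 : ∀ᶠ n in atTop, τ (n+1) - τ n < s / 2 :=
    hdiff.eventually (gt_mem_nhds (by positivity))
  obtain ⟨n, hn1, hn2⟩ := (hev1.and hev2).exists
  have hyn : ‖yl - y n‖ ≤ ε * s / 2 := by
    have := Metric.mem_ball.mp hn1
    rw [dist_comm, dist_eq_norm] at this
    linarith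
  have hsmem : s ∈ uts_stepSet S v ε t (y n) (τ n) := by
    have hτnle : τ n ≤ τinf := le_ciSup hbddτ n
    refine ⟨hspos, by linarith, (2:ℝ)⁻¹ • b + (s * ε)⁻¹ • (yl - y n), ?_, ?_⟩
    · calc ‖(2:ℝ)⁻¹ • b + (s*ε)⁻¹ • (yl - y n)‖
          ≤ ‖(2:ℝ)⁻¹ • b‖ + ‖(s*ε)⁻¹ • (yl - y n)‖ := norm_add_le _ _
        _ ≤ (2:ℝ)⁻¹ * 1 + (s*ε)⁻¹ * (ε * s / 2) := by
            rw [norm_smul, norm_smul, Real.norm_eq_abs, Real.norm_eq_abs,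
              abs_of_pos (by norm_num : (0:ℝ) < 2⁻¹), abs_of_pos (by positivity)]
            gcongr
        _ = 1 := by field_simp; ring
    · have hsε : (s * ε) ≠ 0 := ne_of_gt (by positivity)
      have hkey : y n + s • (v + ε • ((2:ℝ)⁻¹ • b + (s*ε)⁻¹ • (yl - y n)))
          = yl + s • (v + (ε/2) • b) := by
        match_scalars <;> field_simp <;> ring
      rw [hkey]; exact hmem
  have hσle : s ≤ sSup (uts_stepSet S v ε t (y n) (τ n)) := le_csSup (hbdd _ _) hsmem
  have h2s : sSup (uts_stepSet S v ε t (y n) (τ n)) ≤ 2 * (τ (n+1) - τ n) := by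
    show sSup (uts_stepSet S v ε t (f n).1 (f n).2) ≤ 2 * ((f (n+1)).2 - (f n).2)
    rw [hfs]; exact hQσ _ (hgood n)
  linarith


end Aux

/-- Equivalence of the three characterizations of uniform tangent sets. -/
theorem uts_three_equivalent_characterizations
    {X : Type*} [NormedAddCommGroup X] [NormedSpace ℝ X] [CompleteSpace X]
    (S : Set X) (hS : IsClosed S) (x₀ : X) (hx₀ : x₀ ∈ S)
    (D : Set X) (hD : Bornology.IsBounded D) :
    ((∀ ε > (0:ℝ), ∃ δ > (0:ℝ), ∀ v ∈ D, ∀ x ∈ S, ‖x - x₀‖ ≤ δ →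
        ∃ lam > (0:ℝ), ∀ t ∈ Set.Icc (0:ℝ) lam,
          ∃ b : X, ‖b‖ ≤ 1 ∧ x + t • (v + ε • b) ∈ S) ↔
      (∀ ε > (0:ℝ), ∃ δ > (0:ℝ), ∀ v ∈ D, ∀ x ∈ S, ‖x - x₀‖ ≤ δ →
        ∃ t : ℕ → ℝ, (∀ m, 0 < t m) ∧ Tendsto t atTop (nhds 0) ∧
          ∀ m, ∃ b : X, ‖b‖ ≤ 1 ∧ x + t m • (v + ε • b) ∈ S)) ∧
    ((∀ ε > (0:ℝ), ∃ δ > (0:ℝ), ∀ v ∈ D, ∀ x ∈ S, ‖x - x₀‖ ≤ δ →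
        ∃ t : ℕ → ℝ, (∀ m, 0 < t m) ∧ Tendsto t atTop (nhds 0) ∧
          ∀ m, ∃ b : X, ‖b‖ ≤ 1 ∧ x + t m • (v + ε • b) ∈ S) ↔
      (∀ ε > (0:ℝ), ∃ δ > (0:ℝ), ∃ lam > (0:ℝ), ∀ v ∈ D, ∀ x ∈ S, ‖x - x₀‖ ≤ δ →
        ∀ t ∈ Set.Icc (0:ℝ) lam,
          ∃ b : X, ‖b‖ ≤ 1 ∧ x + t • (v + ε • b) ∈ S)) := by
  -- (i) → (ii)
  have hAB : (∀ ε > (0:ℝ), ∃ δ > (0:ℝ), ∀ v ∈ D, ∀ x ∈ S, ‖x - x₀‖ ≤ δ →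
        ∃ lam > (0:ℝ), ∀ t ∈ Set.Icc (0:ℝ) lam,
          ∃ b : X, ‖b‖ ≤ 1 ∧ x + t • (v + ε • b) ∈ S) →
      (∀ ε > (0:ℝ), ∃ δ > (0:ℝ), ∀ v ∈ D, ∀ x ∈ S, ‖x - x₀‖ ≤ δ →
        ∃ t : ℕ → ℝ, (∀ m, 0 < t m) ∧ Tendsto t atTop (nhds 0) ∧
          ∀ m, ∃ b : X, ‖b‖ ≤ 1 ∧ x + t m • (v + ε • b) ∈ S) := by
    intro hA ε hε
    obtain ⟨δ, hδ, hδA⟩ := hA ε hε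
    refine ⟨δ, hδ, fun v hv x hxS hxδ => ?_⟩
    obtain ⟨lam, hlam, hlamA⟩ := hδA v hv x hxS hxδ
    refine ⟨fun m => lam / (m + 1), fun m => by positivity, ?_, fun m => ?_⟩
    · have : Tendsto (fun n : ℕ => 1 / ((n : ℝ) + 1)) atTop (nhds 0) := tendsto_one_div_add_atTop_nhds_zero_nat
      have h2 : Tendsto (fun m : ℕ => lam * (1 / (m + 1))) atTop (nhds (lam * 0)) :=
        this.const_mul lam
      simpa [mul_one_div, div_eq_mul_inv] using h2
    · refine hlamA _ ⟨by positivity, ?_⟩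
      rw [div_le_iff₀ (by positivity)]
      nlinarith [Nat.cast_nonneg (α := ℝ) m]
  -- (iii) → (i)
  have hCA : (∀ ε > (0:ℝ), ∃ δ > (0:ℝ), ∃ lam > (0:ℝ), ∀ v ∈ D, ∀ x ∈ S, ‖x - x₀‖ ≤ δ →
        ∀ t ∈ Set.Icc (0:ℝ) lam,
          ∃ b : X, ‖b‖ ≤ 1 ∧ x + t • (v + ε • b) ∈ S) →
      (∀ ε > (0:ℝ), ∃ δ > (0:ℝ), ∀ v ∈ D, ∀ x ∈ S, ‖x - x₀‖ ≤ δ →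
        ∃ lam > (0:ℝ), ∀ t ∈ Set.Icc (0:ℝ) lam,
          ∃ b : X, ‖b‖ ≤ 1 ∧ x + t • (v + ε • b) ∈ S) := by
    intro hC ε hε
    obtain ⟨δ, hδ, lam, hlam, hh⟩ := hC ε hε
    exact ⟨δ, hδ, fun v hv x hxS hxδ => ⟨lam, hlam, hh v hv x hxS hxδ⟩⟩
  -- (ii) → (iii): the hard direction
  have hBC : (∀ ε > (0:ℝ), ∃ δ > (0:ℝ), ∀ v ∈ D, ∀ x ∈ S, ‖x - x₀‖ ≤ δ →
        ∃ t : ℕ → ℝ, (∀ m, 0 < t m) ∧ Tendsto t atTop (nhds 0) ∧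
          ∀ m, ∃ b : X, ‖b‖ ≤ 1 ∧ x + t m • (v + ε • b) ∈ S) →
      (∀ ε > (0:ℝ), ∃ δ > (0:ℝ), ∃ lam > (0:ℝ), ∀ v ∈ D, ∀ x ∈ S, ‖x - x₀‖ ≤ δ →
        ∀ t ∈ Set.Icc (0:ℝ) lam,
          ∃ b : X, ‖b‖ ≤ 1 ∧ x + t • (v + ε • b) ∈ S) := by
    intro hB ε hε
    obtain ⟨R, hR⟩ := hD.exists_norm_le
    set M : ℝ := max R 0 with hM
    have hM0 : 0 ≤ M := le_max_right _ _
    obtain ⟨δ, hδ, hδB⟩ := hB (ε / 2) (by positivity)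
    refine ⟨δ / 2, by positivity, δ / (2 * (M + ε)), by positivity,
      fun v hv x hxS hxδ t ht => ?_⟩
    rcases eq_or_lt_of_le ht.1 with h0 | h0
    · exact ⟨0, by simp, by simpa [← h0] using hxS⟩
    · have hvM : ‖v‖ ≤ M := le_trans (hR v hv) (le_max_left _ _)
      refine uts_key S hS x₀ v ε δ t hε (fun y hyS hyδ => hδB v hv y hyS hyδ) x hxS h0 ?_
      intro τ y hτ0 hτt hyS hacc
      have htlam : t ≤ δ / (2 * (M + ε)) := ht.2
      have h1 : y - x₀ = (y - (x + τ • v)) + τ • v + (x - x₀) := by abel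
      have h2 : ‖y - x₀‖ ≤ ε * τ + τ * M + δ / 2 := by
        rw [h1]
        refine le_trans (norm_add₃_le) ?_
        gcongr
        · rw [norm_smul, Real.norm_eq_abs, abs_of_nonneg hτ0]
          exact mul_le_mul_of_nonneg_left hvM hτ0
      have hτlam : τ ≤ δ / (2 * (M + ε)) := le_trans hτt htlam
      have hMε : (0:ℝ) < M + ε := by positivity
      have h3 : τ * (M + ε) ≤ δ / (2 * (M + ε)) * (M + ε) :=
        mul_le_mul_of_nonneg_right hτlam hMε.le
      have heq : δ / (2 * (M + ε)) * (M + ε) = δ / 2 := by field_simp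
      nlinarith
  exact ⟨⟨hAB, fun hB => hCA (hBC hB)⟩, ⟨hBC, fun hC => hAB (hCA hC)⟩⟩
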